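/- Suppose 1/M ≤ γ_n ≤ M(n+r)^p and γ_n/γ_{n+1} ≤ M² for all n, with M ≥ 1. Then |K^n[t^k/k!](0)| ≤ (2M)^n for all n and k. -/

import Mathlib

/-- The chromatic derivatives associated with recursion coefficients `γ`. -/
noncomputable def chromDeriv (γ : ℕ → ℝ) : ℕ → (ℝ → ℝ) → (ℝ → ℝ)
  | 0, f => f
  | 1, f => fun t => (1 / γ 0) * deriv f t
  | (n + 2), f => fun t =>
      (1 / γ (n + 1)) * deriv (chromDeriv γ (n + 1) f) t +
        (γ n / γ (n + 1)) * chromDeriv γ n f t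

noncomputable def Emon (j : ℤ) : ℝ → ℝ :=
  fun t => if 0 ≤ j then t ^ j.toNat / (j.toNat.factorial : ℝ) else 0

lemma Emon_hasDerivAt (j : ℤ) (t : ℝ) : HasDerivAt (Emon j) (Emon (j - 1) t) t := by
  rcases lt_trichotomy j 0 with h | h | h
  · have h1 : Emon j = fun _ => (0:ℝ) := by
      funext s; simp only [Emon, if_neg (not_le.mpr h)]
    have h2 : Emon (j-1) t = 0 := by
      simp only [Emon, if_neg (not_le.mpr (by omega : j - 1 < 0))]
    rw [h1, h2]; exact hasDerivAt_const t 0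
  · subst h
    have h1 : Emon 0 = fun _ => (1:ℝ) := by
      funext s; simp [Emon]
    have h2 : Emon (0-1) t = 0 := by
      simp only [Emon, if_neg (not_le.mpr (by norm_num : (0:ℤ) - 1 < 0))]
    rw [h1, h2]; exact hasDerivAt_const t 1
  · obtain ⟨m, rfl⟩ : ∃ m : ℕ, j = (m : ℤ) + 1 := ⟨(j - 1).toNat, by omega⟩
    have h1 : Emon ((m:ℤ)+1) = fun s => s ^ (m+1) / ((m+1).factorial : ℝ) := by
      funext s
      simp only [Emon, if_pos (by omega : (0:ℤ) ≤ (m:ℤ)+1),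
        show ((m:ℤ)+1).toNat = m + 1 by omega]
    have h2 : Emon ((m:ℤ)+1-1) t = t ^ m / (m.factorial : ℝ) := by
      simp only [Emon, if_pos (by omega : (0:ℤ) ≤ (m:ℤ)+1-1),
        show ((m:ℤ)+1-1).toNat = m by omega]
    rw [h1, h2]
    have := (hasDerivAt_pow (m+1) t).div_const ((m+1).factorial : ℝ)
    convert this using 1
    · rfl
    · rfl
    rw [Nat.factorial_succ]
    push_cast
    have hf : (m.factorial : ℝ) ≠ 0 := Nat.cast_ne_zero.mpr m.factorial_ne_zero
    field_simp

lemma Emon_zero (j : ℤ) : Emon j 0 = if j = 0 then 1 else 0 := by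
  rcases lt_trichotomy j 0 with h | h | h
  · simp only [Emon, if_neg (not_le.mpr h), if_neg h.ne]
  · subst h; simp [Emon]
  · have hne : j.toNat ≠ 0 := by omega
    simp only [Emon, if_pos h.le, if_neg h.ne', zero_pow hne, zero_div]

noncomputable def cCoef (γ : ℕ → ℝ) : ℕ → ℕ → ℝ
  | 0, i => if i = 0 then 1 else 0
  | 1, i => if i = 1 then 1 / γ 0 else 0
  | (n + 2), i =>
      (1 / γ (n + 1)) * (if i = 0 then 0 else cCoef γ (n + 1) (i - 1)) +
        (γ n / γ (n + 1)) * cCoef γ n i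

lemma cCoef_vanish (γ : ℕ → ℝ) : ∀ n, (∀ i, n < i → cCoef γ n i = 0) ∧ (∀ i, n + 1 < i → cCoef γ (n+1) i = 0) := by
  intro n
  induction n with
  | zero =>
    refine ⟨fun i hi => ?_, fun i hi => ?_⟩
    · show (if i = 0 then (1:ℝ) else 0) = 0
      rw [if_neg (by omega)]
    · show (if i = 1 then 1 / γ 0 else 0) = 0
      rw [if_neg (by omega)]
  | succ n ih =>
    refine ⟨ih.2, ?_⟩
    intro i hi
    show (1 / γ (n + 1)) * (if i = 0 then 0 else cCoef γ (n + 1) (i - 1)) +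
        (γ n / γ (n + 1)) * cCoef γ n i = 0
    rw [ih.1 i (by omega), if_neg (by omega), ih.2 (i-1) (by omega)]
    ring

lemma chromDeriv_formula (γ : ℕ → ℝ) :
    ∀ n, (∀ k : ℤ, chromDeriv γ n (Emon k) =
        fun t => ∑ i ∈ Finset.range (n+1), cCoef γ n i * Emon (k - i) t) ∧
      (∀ k : ℤ, chromDeriv γ (n+1) (Emon k) =
        fun t => ∑ i ∈ Finset.range (n+2), cCoef γ (n+1) i * Emon (k - i) t) := by
  intro n
  induction n with
  | zero =>
    constructor
    · intro k; funext t; simp [chromDeriv, cCoef]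
    · intro k; funext t
      show (1 / γ 0) * deriv (Emon k) t = _
      rw [(Emon_hasDerivAt k t).deriv]
      simp [cCoef, Finset.sum_range_succ]
  | succ n ih =>
    refine ⟨ih.2, ?_⟩
    intro k
    funext t
    show (1 / γ (n + 1)) * deriv (chromDeriv γ (n + 1) (Emon k)) t +
        (γ n / γ (n + 1)) * chromDeriv γ n (Emon k) t = _
    rw [ih.2 k, ih.1 k]
    have hder : deriv (fun t => ∑ i ∈ Finset.range (n+2), cCoef γ (n+1) i * Emon (k - i) t) t
        = ∑ i ∈ Finset.range (n+2), cCoef γ (n+1) i * Emon (k - i - 1) t := by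
      refine HasDerivAt.deriv ?_
      exact HasDerivAt.fun_sum (fun i _ => (Emon_hasDerivAt (k - i) t).const_mul _)
    rw [hder]
    rw [Finset.sum_range_succ' (fun i => cCoef γ (n+2) i * Emon (k - i) t) (n+2)]
    have h0 : cCoef γ (n+2) 0 * Emon (k - (0:ℕ)) t
        = (γ n / γ (n+1)) * (cCoef γ n 0 * Emon (k - (0:ℕ)) t) := by
      show ((1 / γ (n + 1)) * (if (0:ℕ) = 0 then 0 else cCoef γ (n + 1) (0 - 1)) +
        (γ n / γ (n + 1)) * cCoef γ n 0) * Emon (k - (0:ℕ)) t = _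
      rw [if_pos rfl]; ring
    rw [h0]
    have hsplit : ∀ i ∈ Finset.range (n+2),
        cCoef γ (n+2) (i+1) * Emon (k - (i+1:ℕ)) t
        = (1 / γ (n+1)) * (cCoef γ (n+1) i * Emon (k - i - 1) t)
          + (γ n / γ (n+1)) * (cCoef γ n (i+1) * Emon (k - (i+1:ℕ)) t) := by
      intro i _
      show ((1 / γ (n + 1)) * (if i + 1 = 0 then 0 else cCoef γ (n + 1) (i + 1 - 1)) +
        (γ n / γ (n + 1)) * cCoef γ n (i+1)) * Emon (k - (i+1:ℕ)) t = _
      rw [if_neg (by omega)]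
      simp only [Nat.add_sub_cancel]
      have : (k - (i+1:ℕ)) = k - i - 1 := by push_cast; ring
      rw [this]; ring
    rw [Finset.sum_congr rfl hsplit, Finset.sum_add_distrib, ← Finset.mul_sum, ← Finset.mul_sum]
    have htail : (∑ i ∈ Finset.range (n+2), cCoef γ n (i+1) * Emon (k - (i+1:ℕ)) t)
        + cCoef γ n 0 * Emon (k - (0:ℕ)) t
        = ∑ i ∈ Finset.range (n+1), cCoef γ n i * Emon (k - i) t := by
      rw [← Finset.sum_range_succ' (fun i => cCoef γ n i * Emon (k - i) t) (n+2)]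
      rw [Finset.sum_range_succ, Finset.sum_range_succ (fun i => cCoef γ n i * Emon (k-i) t) (n+1)]
      rw [(cCoef_vanish γ n).1 (n+1) (by omega), (cCoef_vanish γ n).1 (n+2) (by omega)]
      ring
    rw [add_assoc, ← mul_add, htail]

lemma cCoef_bound (γ : ℕ → ℝ) (hγ : ∀ n, 0 < γ n) (M : ℝ) (hM : 1 ≤ M)
    (hγlow : ∀ n, 1 / M ≤ γ n) (hratio : ∀ n, γ n / γ (n + 1) ≤ M ^ 2) :
    ∀ n, (∀ i, |cCoef γ n i| ≤ (2*M)^n) ∧ (∀ i, |cCoef γ (n+1) i| ≤ (2*M)^(n+1)) := by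
  have hMpos : (0:ℝ) < M := lt_of_lt_of_le one_pos hM
  have hinv : ∀ n, 1 / γ n ≤ M := by
    intro n
    calc 1 / γ n ≤ 1 / (1/M) := one_div_le_one_div_of_le (by positivity) (hγlow n)
    _ = M := by field_simp
  intro n
  induction n with
  | zero =>
    constructor
    · intro i
      show |if i = 0 then (1:ℝ) else 0| ≤ _
      split <;> simp
    · intro i
      show |if i = 1 then 1 / γ 0 else 0| ≤ _
      split
      · rw [abs_of_nonneg (le_of_lt (one_div_pos.mpr (hγ 0)))]
        calc 1 / γ 0 ≤ M := hinv 0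
        _ ≤ (2*M)^1 := by nlinarith
      · rw [abs_zero]; exact (pow_pos (by linarith) 1).le
  | succ n ih =>
    refine ⟨ih.2, ?_⟩
    intro i
    show |(1 / γ (n + 1)) * (if i = 0 then 0 else cCoef γ (n + 1) (i - 1)) +
        (γ n / γ (n + 1)) * cCoef γ n i| ≤ _
    have h2Mpow : ∀ m : ℕ, (0:ℝ) < (2*M)^m := fun m => pow_pos (by linarith) m
    have h1 : |(if i = 0 then (0:ℝ) else cCoef γ (n + 1) (i - 1))| ≤ (2*M)^(n+1) := by
      split
      · rw [abs_zero]; exact (h2Mpow (n+1)).le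
      · exact ih.2 _
    have h2 : |cCoef γ n i| ≤ (2*M)^n := ih.1 i
    have hr1 : 0 ≤ 1 / γ (n+1) := le_of_lt (one_div_pos.mpr (hγ (n+1)))
    have hr2 : 0 ≤ γ n / γ (n+1) := le_of_lt (div_pos (hγ n) (hγ (n+1)))
    have hpow : (0:ℝ) < (2*M)^n := pow_pos (by linarith) n
    calc |(1 / γ (n + 1)) * (if i = 0 then (0:ℝ) else cCoef γ (n + 1) (i - 1)) +
        (γ n / γ (n + 1)) * cCoef γ n i|
        ≤ (1 / γ (n+1)) * |(if i = 0 then (0:ℝ) else cCoef γ (n + 1) (i - 1))|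
          + (γ n / γ (n+1)) * |cCoef γ n i| := by
          refine (abs_add_le _ _).trans ?_
          rw [abs_mul, abs_mul, abs_of_nonneg hr1, abs_of_nonneg hr2]
      _ ≤ M * (2*M)^(n+1) + M^2 * (2*M)^n := by
          gcongr
          · exact hinv (n+1)
          · exact hratio n
      _ ≤ (2*M)^(n+2) := by
          have ha : M * (2*M)^(n+1) + M^2 * (2*M)^n = 3*(M^2*(2*M)^n) := by ring
          have hb : (2*M)^(n+2) = 4*(M^2*(2*M)^n) := by ring
          have hc : 0 ≤ M^2*(2*M)^n := mul_nonneg (sq_nonneg M) hpow.le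
          rw [ha, hb]
          linarith
  
/-- If `1/M ≤ γ_n ≤ M(n+r)^p` and `γ_n/γ_{n+1} ≤ M²` for all `n`, with `M ≥ 1`,
then `|K^n[t^k/k!](0)| ≤ (2M)^n` for all `n` and `k`. -/
theorem chromDeriv_monomial_bound
    (γ : ℕ → ℝ) (hγ : ∀ n, 0 < γ n)
    (M : ℝ) (hM : 1 ≤ M) (r : ℕ) (p : ℝ) (hp : 0 ≤ p)
    (hγlow : ∀ n, 1 / M ≤ γ n)
    (hγup : ∀ n, γ n ≤ M * (((n + r : ℕ) : ℝ)) ^ p)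
    (hratio : ∀ n, γ n / γ (n + 1) ≤ M ^ 2) :
    ∀ n k : ℕ,
      |chromDeriv γ n (fun t : ℝ => t ^ k / (k.factorial : ℝ)) 0| ≤
        (2 * M) ^ n := by
  intro n k
  have hMpos : (0:ℝ) < M := lt_of_lt_of_le one_pos hM
  have hE : (fun t : ℝ => t ^ k / (k.factorial : ℝ)) = Emon (k : ℤ) := by
    funext t
    simp [Emon, Int.toNat_natCast]
  rw [hE, (chromDeriv_formula γ n).1 (k : ℤ)]
  have hval : ∑ i ∈ Finset.range (n+1), cCoef γ n i * Emon ((k:ℤ) - i) 0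
      = if k ∈ Finset.range (n+1) then cCoef γ n k else 0 := by
    rw [← Finset.sum_ite_eq' (Finset.range (n+1)) k (fun i => cCoef γ n i)]
    refine Finset.sum_congr rfl (fun i _ => ?_)
    rw [Emon_zero]
    by_cases h : i = k
    · subst h; simp
    · have h1 : ¬((k:ℤ) - (i:ℤ) = 0) := by omega
      rw [if_neg h1, if_neg h, mul_zero]
  show |∑ i ∈ Finset.range (n+1), cCoef γ n i * Emon ((k:ℤ) - i) 0| ≤ (2*M)^n
  rw [hval]
  split
  · exact (cCoef_bound γ hγ M hM hγlow hratio n).1 k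
  · rw [abs_zero]
    exact (pow_pos (by linarith : (0:ℝ) < 2*M) n).le
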